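/- Let m ≡ 1 (mod 8) with m ≥ 9, n = 2^m − 1, and v = 2^{(m−1)/2} − 1. Then gcd(v, n) = 1, and for every integer a with 1 ≤ a ≤ 2^{(m−1)/2} + 2, the binary weight of (a·v mod n) is congruent to 0 or 3 modulo 4. -/

import Mathlib

def w2 (x : ℕ) : ℕ := (Nat.digits 2 x).sum

lemma w2_zero : w2 0 = 0 := by simp [w2]

lemma w2_step (x : ℕ) : w2 x = x % 2 + w2 (x / 2) := by
  rcases Nat.eq_zero_or_pos x with rfl | hx
  · simp [w2]
  · unfold w2
    rw [Nat.digits_def' (by norm_num) hx, List.sum_cons]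

lemma w2_mul_pow_add (k : ℕ) : ∀ x y : ℕ, y < 2 ^ k →
    w2 (2 ^ k * x + y) = w2 x + w2 y := by
  induction k with
  | zero =>
    intro x y hy
    interval_cases y
    simp [w2]
  | succ k ih =>
    intro x y hy
    have hz : 2 ^ (k+1) * x = 2 * (2 ^ k * x) := by ring
    have hy2 : y / 2 < 2 ^ k := by
      have h2 : (2:ℕ) ^ (k+1) = 2 * 2 ^ k := by ring
      omega
    rw [w2_step (2 ^ (k+1) * x + y), hz]
    have hmod : (2 * (2 ^ k * x) + y) % 2 = y % 2 := by omega
    have hdiv : (2 * (2 ^ k * x) + y) / 2 = 2 ^ k * x + y / 2 := by omega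
    rw [hmod, hdiv, ih x (y/2) hy2, w2_step y]
    omega

lemma w2_compl (k : ℕ) : ∀ a : ℕ, a ≤ 2 ^ k - 1 →
    w2 a + w2 (2 ^ k - 1 - a) = k := by
  induction k with
  | zero => intro a ha; interval_cases a; simp [w2]
  | succ k ih =>
    intro a ha
    have hpk : 0 < 2 ^ k := Nat.pow_pos (by norm_num)
    have hpk1 : (2:ℕ) ^ (k+1) = 2 * 2 ^ k := by ring
    set b := 2 ^ (k+1) - 1 - a with hb
    have hab : a + b = 2 ^ (k+1) - 1 := by omega
    have hmod : a % 2 + b % 2 = 1 := by omega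
    have hdiv : a / 2 + b / 2 = 2 ^ k - 1 := by omega
    have hle : a / 2 ≤ 2 ^ k - 1 := by omega
    have hih := ih (a / 2) hle
    have hbd : b / 2 = 2 ^ k - 1 - a / 2 := by omega
    rw [w2_step a, w2_step b, hbd]
    omega

lemma w2_pow_sub_one (k : ℕ) : w2 (2 ^ k - 1) = k := by
  have := w2_compl k 0 (Nat.zero_le _)
  simpa [w2_zero] using this

lemma w2_one : w2 1 = 1 := by simp [w2]

lemma w2_pow (k : ℕ) : w2 (2 ^ k) = 1 := by
  have := w2_mul_pow_add k 1 0 (Nat.pow_pos (by norm_num))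
  simpa [w2_zero, w2_one] using this

theorem stmt16 (m : ℕ) (hm : m % 8 = 1) (hm9 : 9 ≤ m)
    (n v : ℕ) (hn : n = 2 ^ m - 1) (hv : v = 2 ^ ((m - 1) / 2) - 1) :
    Nat.gcd v n = 1 ∧
    ∀ a : ℕ, 1 ≤ a → a ≤ 2 ^ ((m - 1) / 2) + 2 →
      w2 (a * v % n) % 4 = 0 ∨ w2 (a * v % n) % 4 = 3 := by
  set k := (m - 1) / 2 with hk
  have hmk : m = 2 * k + 1 := by omega
  have hk4 : k % 4 = 0 := by omega
  have hkge : 4 ≤ k := by omega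
  have ht16 : (16:ℕ) ≤ 2 ^ k :=
    calc (16:ℕ) = 2 ^ 4 := by norm_num
    _ ≤ 2 ^ k := Nat.pow_le_pow_right (by norm_num) hkge
  have hpm : (2:ℕ) ^ m = 2 * 2 ^ k * 2 ^ k := by
    rw [hmk, pow_succ, two_mul, pow_add]; ring
  have honek : (1:ℕ) ≤ 2 ^ k := Nat.one_le_two_pow
  have honem : (1:ℕ) ≤ 2 * 2 ^ k * 2 ^ k := by nlinarith [honek]
  constructor
  · -- gcd part
    have hkey : n = 2 * v * (2 ^ k + 1) + 1 := by
      rw [hn, hv, hpm]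
      zify [honem, honek]
      ring
    have h1 : Nat.gcd v n ∣ n := Nat.gcd_dvd_right v n
    have h2 : Nat.gcd v n ∣ 2 * v * (2 ^ k + 1) :=
      Dvd.dvd.mul_right (Dvd.dvd.mul_left (Nat.gcd_dvd_left v n) 2) _
    have h3 : Nat.gcd v n ∣ 1 := by
      have h4 := Nat.dvd_sub h1 h2
      have h5 : n - 2 * v * (2 ^ k + 1) = 1 := by omega
      rwa [h5] at h4
    exact Nat.dvd_one.mp h3
  · intro a ha1 ha2
    have hlt : a * v < n := by
      have h1 : a * v ≤ (2 ^ k + 2) * v := Nat.mul_le_mul_right v ha2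
      have h2 : (2 ^ k + 2) * v < n := by
        rw [hn, hv, hpm]
        zify [honem, honek]
        nlinarith [ht16]
      omega
    rw [Nat.mod_eq_of_lt hlt]
    left
    rcases (by omega : a ≤ 2 ^ k ∨ a = 2 ^ k + 1 ∨ a = 2 ^ k + 2) with h | h | h
    · have hd : a * v = 2 ^ k * (a - 1) + (2 ^ k - a) := by
        rw [hv]
        zify [honek, ha1, h]
        ring
      rw [hd, w2_mul_pow_add k (a-1) (2^k - a) (by omega)]
      have h6 : 2 ^ k - a = 2 ^ k - 1 - (a - 1) := by omega
      rw [h6, w2_compl k (a-1) (by omega)]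
      omega
    · have honekk : (1:ℕ) ≤ 2 ^ k * 2 ^ k := by nlinarith [honek]
      have hd : a * v = 2 ^ k * 2 ^ k - 1 := by
        rw [h, hv]
        zify [honek, honekk]
        ring
      have hw := w2_pow_sub_one (2 * k)
      rw [two_mul, pow_add] at hw
      rw [hd, hw]
      omega
    · have hd : a * v = 2 ^ k * 2 ^ k + (2 ^ k - 2) := by
        rw [h, hv]
        zify [honek, (by omega : (2:ℕ) ≤ 2 ^ k)]
        ring
      rw [hd, w2_mul_pow_add k (2 ^ k) (2 ^ k - 2) (by omega), w2_pow]
      have h7 : 2 ^ k - 2 = 2 ^ k - 1 - 1 := by omega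
      have h8 := w2_compl k 1 (by omega)
      rw [w2_one] at h8
      rw [h7]
      omega
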